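/- Let (X_{i,n})_{1≤i≤n} be a triangular array of independent random vectors with values in ℝ^d which belongs to the class C̄(d,b) for some b>0 and satisfies sup_{n≥1} ρ₁(n) < ∞. Then for all 0 < r < R, limsup_{n→∞} sup_{r ≤ ‖u‖₂ ≤ R} (1/n) ∑_{i=1}^n |φ_{X_{i,n}}(u)| < 1. -/

import Mathlib

open MeasureTheory ProbabilityTheory Filter RealInnerProductSpace

variable {Ω : Type*} [MeasureSpace Ω]

/-- The characteristic function of a random vector `X : Ω → ℝ^d`. -/
noncomputable def charFnRV {d : ℕ} (X : Ω → EuclideanSpace ℝ (Fin d))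
    (t : EuclideanSpace ℝ (Fin d)) : ℂ :=
  ∫ ω, Complex.exp ((⟪t, X ω⟫ : ℝ) * Complex.I) ∂ℙ

/-- The mean weak Cramer condition (class `C̄(d,b)`) for a triangular array
`(X_{i,n})_{0 ≤ i < n}`. -/
def meanWeakCramer {d : ℕ} (X : ℕ → ℕ → Ω → EuclideanSpace ℝ (Fin d)) (b : ℝ) : Prop :=
  ∃ C > (0 : ℝ), ∃ R > (0 : ℝ), ∀ t : EuclideanSpace ℝ (Fin d), R < ‖t‖ →
    ∀ᶠ n : ℕ in atTop,
      (1 / (n : ℝ)) * ∑ i ∈ Finset.range n, ‖charFnRV (X i n) t‖ ≤ 1 - C / ‖t‖ ^ b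

/-- The average `ℓ`-th moment `ρ_ℓ(n)` of a triangular array. -/
noncomputable def rho {d : ℕ} (X : ℕ → ℕ → Ω → EuclideanSpace ℝ (Fin d)) (ℓ : ℝ) (n : ℕ) : ℝ :=
  (1 / (n : ℝ)) * ∑ i ∈ Finset.range n, ∫ ω, ‖X i n ω‖ ^ ℓ ∂ℙ

section Aux

lemma aux_abs_sin_nat_mul_le (n : ℕ) (x : ℝ) : |Real.sin (n * x)| ≤ n * |Real.sin x| := by
  induction n with
  | zero => simp
  | succ n ih =>
      have h : ((n : ℝ) + 1) * x = n * x + x := by ring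
      rw [Nat.cast_succ, h, Real.sin_add]
      calc |Real.sin (n*x) * Real.cos x + Real.cos (n*x) * Real.sin x|
          ≤ |Real.sin (n*x) * Real.cos x| + |Real.cos (n*x) * Real.sin x| := abs_add_le _ _
        _ ≤ |Real.sin (n*x)| * 1 + 1 * |Real.sin x| := by
            rw [abs_mul, abs_mul]
            gcongr
            · exact Real.abs_cos_le_one x
            · exact Real.abs_cos_le_one _
        _ ≤ (n : ℝ) * |Real.sin x| + |Real.sin x| := by
            rw [mul_one, one_mul]; gcongr
        _ = ((n : ℝ) + 1) * |Real.sin x| := by ring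

lemma aux_one_sub_cos (y : ℝ) : 1 - Real.cos y = 2 * Real.sin (y/2) ^ 2 := by
  have := Real.sin_sq_eq_half_sub (y/2)
  rw [mul_div_cancel₀ y (two_ne_zero)] at this
  linarith

lemma aux_one_sub_cos_nat_mul_le (k : ℕ) (x : ℝ) :
    1 - Real.cos (k * x) ≤ (k : ℝ)^2 * (1 - Real.cos x) := by
  rw [aux_one_sub_cos, aux_one_sub_cos]
  have h : (k : ℝ) * x / 2 = k * (x/2) := by ring
  rw [h]
  have h2 : Real.sin ((k:ℝ) * (x/2)) ^ 2 ≤ ((k:ℝ) * |Real.sin (x/2)|)^2 := by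
    rw [← sq_abs]
    apply pow_le_pow_left₀ (abs_nonneg _)
    exact aux_abs_sin_nat_mul_le k (x/2)
  calc 2 * Real.sin ((k:ℝ) * (x/2)) ^ 2 ≤ 2 * ((k:ℝ) * |Real.sin (x/2)|)^2 := by linarith
    _ = (k:ℝ)^2 * (2 * Real.sin (x/2)^2) := by rw [mul_pow, sq_abs]; ring

lemma aux_norm_exp_mul_I_sub_one (x : ℝ) : ‖Complex.exp (x * Complex.I) - 1‖ ≤ |x| := by
  have h1 : ‖Complex.exp (x * Complex.I) - 1‖^2 = 2 - 2 * Real.cos x := by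
    rw [← Complex.normSq_eq_norm_sq]
    simp [Complex.normSq_apply, Complex.exp_ofReal_mul_I_re, Complex.exp_ofReal_mul_I_im,
      Complex.sub_re, Complex.sub_im]
    nlinarith [Real.sin_sq_add_cos_sq x]
  have h2 : Real.sin (x/2)^2 ≤ (x/2)^2 := by
    rw [← sq_abs, ← sq_abs (x/2)]
    exact pow_le_pow_left₀ (abs_nonneg _) (Real.abs_sin_le_abs) 2
  nlinarith [norm_nonneg (Complex.exp (x * Complex.I) - 1), abs_nonneg x,
    aux_one_sub_cos x, sq_abs x]

variable {d : ℕ}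

/-- Auxiliary: characteristic function of a measure. -/
noncomputable def chiAux (μ : Measure (EuclideanSpace ℝ (Fin d)))
    (t : EuclideanSpace ℝ (Fin d)) : ℂ :=
  ∫ x, Complex.exp ((⟪t, x⟫ : ℝ) * Complex.I) ∂μ

lemma aux_norm_chi_le_one (μ : Measure (EuclideanSpace ℝ (Fin d))) [IsProbabilityMeasure μ]
    (t : EuclideanSpace ℝ (Fin d)) : ‖chiAux μ t‖ ≤ 1 := by
  refine le_trans (norm_integral_le_integral_norm _) ?_
  simp only [Complex.norm_exp_ofReal_mul_I]
  simp

lemma aux_cos_integrable (μ : Measure (EuclideanSpace ℝ (Fin d))) [IsProbabilityMeasure μ]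
    (t : EuclideanSpace ℝ (Fin d)) :
    Integrable (fun p : EuclideanSpace ℝ (Fin d) × EuclideanSpace ℝ (Fin d) =>
      Real.cos ⟪t, p.1 - p.2⟫) (μ.prod μ) := by
  apply (integrable_const (1:ℝ)).mono'
  · exact (Real.continuous_cos.comp
      (continuous_const.inner (continuous_fst.sub continuous_snd))).aestronglyMeasurable
  · exact ae_of_all _ fun p => by simpa using Real.abs_cos_le_one _

/-- `‖χ_μ(t)‖² = ∫∫ cos⟪t, x - y⟫`. -/
lemma aux_normSq_chi (μ : Measure (EuclideanSpace ℝ (Fin d))) [IsProbabilityMeasure μ]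
    (t : EuclideanSpace ℝ (Fin d)) :
    ‖chiAux μ t‖ ^ 2 =
      ∫ p : EuclideanSpace ℝ (Fin d) × EuclideanSpace ℝ (Fin d),
        Real.cos ⟪t, p.1 - p.2⟫ ∂(μ.prod μ) := by
  have hconj : (starRingEnd ℂ) (chiAux μ t) = ∫ y, Complex.exp (-(⟪t, y⟫ : ℝ) * Complex.I) ∂μ := by
    rw [chiAux, ← integral_conj]
    congr 1; funext y
    rw [← Complex.exp_conj]
    congr 1
    simp [Complex.conj_I]
  have hprod : chiAux μ t * (starRingEnd ℂ) (chiAux μ t)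
      = ∫ p : EuclideanSpace ℝ (Fin d) × EuclideanSpace ℝ (Fin d),
          Complex.exp ((⟪t, p.1 - p.2⟫ : ℝ) * Complex.I) ∂(μ.prod μ) := by
    rw [hconj, chiAux, ← integral_prod_mul]
    congr 1; funext p
    rw [← Complex.exp_add]
    congr 1
    push_cast [inner_sub_right]
    ring
  have hint : Integrable (fun p : EuclideanSpace ℝ (Fin d) × EuclideanSpace ℝ (Fin d) =>
      Complex.exp ((⟪t, p.1 - p.2⟫ : ℝ) * Complex.I)) (μ.prod μ) := by
    apply (integrable_const (1:ℝ)).mono'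
    · apply Continuous.aestronglyMeasurable
      exact Complex.continuous_exp.comp
        ((Complex.continuous_ofReal.comp
          (continuous_const.inner (continuous_fst.sub continuous_snd))).mul continuous_const)
    · exact ae_of_all _ fun p => (Complex.norm_exp_ofReal_mul_I _).le
  have h1 : ‖chiAux μ t‖ ^ 2 = (chiAux μ t * (starRingEnd ℂ) (chiAux μ t)).re := by
    rw [Complex.mul_conj, Complex.ofReal_re, ← Complex.sq_norm]
  rw [h1, hprod, ← RCLike.re_to_complex, ← integral_re hint]
  congr 1; funext p
  rw [RCLike.re_to_complex]
  exact Complex.exp_ofReal_mul_I_re _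

/-- Key multiple-angle inequality for the squared modulus of the characteristic function. -/
lemma aux_normSq_smul (μ : Measure (EuclideanSpace ℝ (Fin d))) [IsProbabilityMeasure μ]
    (k : ℕ) (t : EuclideanSpace ℝ (Fin d)) :
    1 - ‖chiAux μ ((k:ℝ) • t)‖ ^ 2 ≤ (k:ℝ)^2 * (1 - ‖chiAux μ t‖ ^ 2) := by
  rw [aux_normSq_chi, aux_normSq_chi]
  have hcount : IsProbabilityMeasure (μ.prod μ) := inferInstance
  have hs : ∀ p : EuclideanSpace ℝ (Fin d) × EuclideanSpace ℝ (Fin d),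
      (⟪(k:ℝ) • t, p.1 - p.2⟫ : ℝ) = (k:ℝ) * ⟪t, p.1 - p.2⟫ :=
    fun p => real_inner_smul_left _ _ _
  have h1 : (1:ℝ) - ∫ p, Real.cos ⟪(k:ℝ) • t, p.1 - p.2⟫ ∂(μ.prod μ)
      = ∫ p : EuclideanSpace ℝ (Fin d) × EuclideanSpace ℝ (Fin d),
          (1 - Real.cos ((k:ℝ) * ⟪t, p.1 - p.2⟫)) ∂(μ.prod μ) := by
    rw [integral_sub (integrable_const 1) (by simpa [hs] using aux_cos_integrable μ ((k:ℝ) • t))]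
    simp [hs]
  have h2 : (k:ℝ)^2 * ((1:ℝ) - ∫ p, Real.cos ⟪t, p.1 - p.2⟫ ∂(μ.prod μ))
      = ∫ p : EuclideanSpace ℝ (Fin d) × EuclideanSpace ℝ (Fin d),
          (k:ℝ)^2 * (1 - Real.cos (⟪t, p.1 - p.2⟫)) ∂(μ.prod μ) := by
    rw [integral_const_mul, integral_sub (integrable_const 1) (aux_cos_integrable μ t)]
    simp
  rw [h1, h2]
  apply integral_mono
  · have := aux_cos_integrable μ ((k:ℝ) • t)
    simp only [hs] at this
    exact (integrable_const 1).sub this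
  · exact ((integrable_const 1).sub (aux_cos_integrable μ t)).const_mul _
  · intro p
    exact aux_one_sub_cos_nat_mul_le k _

lemma aux_integrable_exp_omega (X : Ω → EuclideanSpace ℝ (Fin d)) (hm : Measurable X)
    [IsProbabilityMeasure (ℙ : Measure Ω)] (t : EuclideanSpace ℝ (Fin d)) :
    Integrable (fun ω => Complex.exp ((⟪t, X ω⟫ : ℝ) * Complex.I)) ℙ := by
  apply (integrable_const (1:ℝ)).mono'
  · have hc : Continuous fun x : EuclideanSpace ℝ (Fin d) =>
        Complex.exp ((⟪t, x⟫ : ℝ) * Complex.I) :=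
      Complex.continuous_exp.comp
        ((Complex.continuous_ofReal.comp (continuous_const.inner continuous_id)).mul
          continuous_const)
    exact (hc.measurable.comp hm).aestronglyMeasurable
  · exact ae_of_all _ fun ω => (Complex.norm_exp_ofReal_mul_I _).le

lemma aux_charFnRV_eq_chi (X : Ω → EuclideanSpace ℝ (Fin d)) (hm : Measurable X)
    (t : EuclideanSpace ℝ (Fin d)) :
    charFnRV X t = chiAux (Measure.map X ℙ) t := by
  rw [charFnRV, chiAux, integral_map hm.aemeasurable]
  apply Continuous.aestronglyMeasurable
  exact Complex.continuous_exp.comp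
    ((Complex.continuous_ofReal.comp (continuous_const.inner continuous_id)).mul continuous_const)

/-- Lipschitz estimate for the characteristic function of a random vector. -/
lemma aux_charFnRV_lipschitz [IsProbabilityMeasure (ℙ : Measure Ω)]
    (X : Ω → EuclideanSpace ℝ (Fin d)) (hm : Measurable X)
    (hi : Integrable (fun ω => ‖X ω‖) ℙ) (t s : EuclideanSpace ℝ (Fin d)) :
    ‖charFnRV X t‖ ≤ ‖charFnRV X s‖ + (∫ ω, ‖X ω‖ ∂ℙ) * ‖t - s‖ := by
  have h1 : ‖charFnRV X t‖ - ‖charFnRV X s‖ ≤ ‖charFnRV X t - charFnRV X s‖ :=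
    norm_sub_norm_le _ _
  have h2 : ‖charFnRV X t - charFnRV X s‖ ≤ (∫ ω, ‖X ω‖ ∂ℙ) * ‖t - s‖ := by
    rw [charFnRV, charFnRV,
      ← integral_sub (aux_integrable_exp_omega X hm t) (aux_integrable_exp_omega X hm s)]
    refine le_trans (norm_integral_le_integral_norm _) ?_
    have hle : ∀ ω, ‖Complex.exp ((⟪t, X ω⟫ : ℝ) * Complex.I)
        - Complex.exp ((⟪s, X ω⟫ : ℝ) * Complex.I)‖ ≤ ‖X ω‖ * ‖t - s‖ := by
      intro ω
      have key : Complex.exp ((⟪t, X ω⟫ : ℝ) * Complex.I)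
          - Complex.exp ((⟪s, X ω⟫ : ℝ) * Complex.I)
          = Complex.exp ((⟪s, X ω⟫ : ℝ) * Complex.I)
            * (Complex.exp ((⟪t - s, X ω⟫ : ℝ) * Complex.I) - 1) := by
        rw [mul_sub, mul_one, ← Complex.exp_add]
        congr 2
        push_cast [inner_sub_left]
        ring
      rw [key, norm_mul, Complex.norm_exp_ofReal_mul_I, one_mul]
      calc ‖Complex.exp ((⟪t - s, X ω⟫ : ℝ) * Complex.I) - 1‖
          ≤ |(⟪t - s, X ω⟫ : ℝ)| := aux_norm_exp_mul_I_sub_one _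
        _ ≤ ‖t - s‖ * ‖X ω‖ := abs_real_inner_le_norm _ _
        _ = ‖X ω‖ * ‖t - s‖ := mul_comm _ _
    calc ∫ ω, ‖Complex.exp ((⟪t, X ω⟫ : ℝ) * Complex.I)
          - Complex.exp ((⟪s, X ω⟫ : ℝ) * Complex.I)‖ ∂ℙ
        ≤ ∫ ω, ‖X ω‖ * ‖t - s‖ ∂ℙ := by
          refine integral_mono_of_nonneg (ae_of_all _ fun ω => norm_nonneg _)
            (hi.mul_const _) (ae_of_all _ hle)
      _ = (∫ ω, ‖X ω‖ ∂ℙ) * ‖t - s‖ := integral_mul_const _ _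
  linarith

end Aux

/-- Local Cramer bound: a triangular array of independent random vectors in the class
`C̄(d,b)` with bounded average first moments satisfies
`limsup_n sup_{r ≤ ‖u‖ ≤ R} (1/n) ∑ |φ_{X_{i,n}}(u)| < 1`. -/
theorem statement8 [IsProbabilityMeasure (ℙ : Measure Ω)] {d : ℕ} {b : ℝ} (hb : 0 < b)
    (X : ℕ → ℕ → Ω → EuclideanSpace ℝ (Fin d))
    (hmeas : ∀ i n, Measurable (X i n))
    (hindep : ∀ n, iIndepFun (fun i : Fin n => X i n) ℙ)
    (hint : ∀ i n, Integrable (fun ω => ‖X i n ω‖) ℙ)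
    (hcramer : meanWeakCramer X b)
    (hrho : ∃ K : ℝ, ∀ n : ℕ, 1 ≤ n → rho X 1 n ≤ K)
    (r R : ℝ) (hr : 0 < r) (hrR : r < R) :
    limsup (fun n : ℕ =>
        ⨆ u : {u : EuclideanSpace ℝ (Fin d) // r ≤ ‖u‖ ∧ ‖u‖ ≤ R},
          (1 / (n : ℝ)) * ∑ i ∈ Finset.range n,
            ‖charFnRV (X i n) (u : EuclideanSpace ℝ (Fin d))‖)
      atTop < 1 := by
  classical
  obtain ⟨C, hC, R₀, hR₀, hcram⟩ := hcramer
  obtain ⟨K, hK⟩ := hrho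
  obtain ⟨k, hk⟩ := exists_nat_gt (R₀ / r)
  have hR0 : (0:ℝ) < R := lt_trans hr hrR
  have hkpos : 0 < (k:ℝ) := lt_trans (div_pos hR₀ hr) hk
  have hkr : R₀ < (k:ℝ) * r := by
    have := (div_lt_iff₀ hr).mp hk
    linarith [this]
  set K' : ℝ := max K 1 with hK'def
  have hK'pos : (0:ℝ) < K' := lt_of_lt_of_le one_pos (le_max_right _ _)
  have hkRpos : 0 < (k:ℝ) * R := mul_pos hkpos hR0
  set δ : ℝ := C / ((k:ℝ)*R) ^ b with hδdef
  have hδpos : 0 < δ := div_pos hC (Real.rpow_pos_of_pos hkRpos b)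
  set ε : ℝ := δ / (2 * K') with hεdef
  have hεpos : 0 < ε := div_pos hδpos (by positivity)
  have hk2 : (0:ℝ) < (k:ℝ)^2 := by positivity
  set M : ℝ := Real.sqrt (1 - (δ/2) / (k:ℝ)^2) with hMdef
  -- the compact annulus at scale k
  set A : Set (EuclideanSpace ℝ (Fin d)) :=
    Metric.closedBall 0 ((k:ℝ)*R) ∩ {t | (k:ℝ)*r ≤ ‖t‖} with hAdef
  have hAcompact : IsCompact A := by
    apply Metric.isCompact_of_isClosed_isBounded
    · exact Metric.isClosed_closedBall.inter (isClosed_le continuous_const continuous_norm)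
    · exact Metric.isBounded_closedBall.subset Set.inter_subset_left
  obtain ⟨s, hsA, hsfin, hscover⟩ := hAcompact.elim_finite_subcover_image
    (fun t (_ : t ∈ A) => Metric.isOpen_ball)
    (fun t ht => Set.mem_biUnion ht (Metric.mem_ball_self hεpos))
  -- the eventual bounds at the finitely many centers
  have hev1 : ∀ᶠ n : ℕ in atTop, ∀ t ∈ s,
      (1/(n:ℝ)) * ∑ i ∈ Finset.range n, ‖charFnRV (X i n) t‖ ≤ 1 - C/‖t‖^b := by
    rw [eventually_all_finite hsfin]
    intro t ht
    apply hcram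
    have htA : t ∈ A := hsA ht
    have h1 : (k:ℝ)*r ≤ ‖t‖ := htA.2
    linarith
  -- the uniform eventual bound
  have hub : ∀ᶠ n : ℕ in atTop,
      (⨆ u : {u : EuclideanSpace ℝ (Fin d) // r ≤ ‖u‖ ∧ ‖u‖ ≤ R},
        (1 / (n : ℝ)) * ∑ i ∈ Finset.range n,
          ‖charFnRV (X i n) (u : EuclideanSpace ℝ (Fin d))‖) ≤ M := by
    filter_upwards [hev1, eventually_ge_atTop 1] with n hn hn1
    have hnpos : (0:ℝ) < (n:ℝ) := by exact_mod_cast hn1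
    apply Real.iSup_le _ (Real.sqrt_nonneg _)
    rintro ⟨u, hur, huR⟩
    set v : EuclideanSpace ℝ (Fin d) := (k:ℝ) • u with hvdef
    have hvnorm : ‖v‖ = (k:ℝ) * ‖u‖ := by
      rw [hvdef, norm_smul, Real.norm_eq_abs, abs_of_nonneg hkpos.le]
    have hvA : v ∈ A := by
      constructor
      · rw [Metric.mem_closedBall, dist_zero_right, hvnorm]
        exact mul_le_mul_of_nonneg_left huR hkpos.le
      · show (k:ℝ)*r ≤ ‖v‖
        rw [hvnorm]
        exact mul_le_mul_of_nonneg_left hur hkpos.le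
    obtain ⟨t, hts, hvt⟩ := Set.mem_iUnion₂.mp (hscover hvA)
    have htA := hsA hts
    have htub : ‖t‖ ≤ (k:ℝ)*R := by
      have := htA.1
      rwa [Metric.mem_closedBall, dist_zero_right] at this
    have htlb : (k:ℝ)*r ≤ ‖t‖ := htA.2
    have htpos : (0:ℝ) < ‖t‖ := lt_of_lt_of_le (mul_pos hkpos hr) htlb
    have hvtlt : ‖v - t‖ ≤ ε := by
      have := Metric.mem_ball.mp hvt
      rw [dist_eq_norm] at this
      exact this.le
    -- Lipschitz step : the average at v is close to the average at t
    have hlip : (1/(n:ℝ)) * ∑ i ∈ Finset.range n, ‖charFnRV (X i n) v‖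
        ≤ (1/(n:ℝ)) * ∑ i ∈ Finset.range n, ‖charFnRV (X i n) t‖ + K' * ε := by
      have hsumle : ∑ i ∈ Finset.range n, ‖charFnRV (X i n) v‖
          ≤ ∑ i ∈ Finset.range n, (‖charFnRV (X i n) t‖ + (∫ ω, ‖X i n ω‖ ∂ℙ) * ‖v - t‖) :=
        Finset.sum_le_sum fun i _ =>
          aux_charFnRV_lipschitz (X i n) (hmeas i n) (hint i n) v t
      have hrho_eq : (1/(n:ℝ)) * ∑ i ∈ Finset.range n, ∫ ω, ‖X i n ω‖ ∂ℙ = rho X 1 n := by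
        rw [rho]
        congr 1
        refine Finset.sum_congr rfl fun i _ => ?_
        congr 1
        funext ω
        rw [Real.rpow_one]
      have hrhole : (1/(n:ℝ)) * ∑ i ∈ Finset.range n, ∫ ω, ‖X i n ω‖ ∂ℙ ≤ K' := by
        rw [hrho_eq]
        exact le_trans (hK n hn1) (le_max_left _ _)
      have hrhononneg : (0:ℝ) ≤ (1/(n:ℝ)) * ∑ i ∈ Finset.range n, ∫ ω, ‖X i n ω‖ ∂ℙ := by
        apply mul_nonneg (by positivity)
        exact Finset.sum_nonneg fun i _ =>
          integral_nonneg fun ω => norm_nonneg _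
      calc (1/(n:ℝ)) * ∑ i ∈ Finset.range n, ‖charFnRV (X i n) v‖
          ≤ (1/(n:ℝ)) * ∑ i ∈ Finset.range n,
              (‖charFnRV (X i n) t‖ + (∫ ω, ‖X i n ω‖ ∂ℙ) * ‖v - t‖) := by
            apply mul_le_mul_of_nonneg_left hsumle (by positivity)
        _ = (1/(n:ℝ)) * ∑ i ∈ Finset.range n, ‖charFnRV (X i n) t‖
            + ((1/(n:ℝ)) * ∑ i ∈ Finset.range n, ∫ ω, ‖X i n ω‖ ∂ℙ) * ‖v - t‖ := by
            rw [Finset.sum_add_distrib, ← Finset.sum_mul]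
            ring
        _ ≤ (1/(n:ℝ)) * ∑ i ∈ Finset.range n, ‖charFnRV (X i n) t‖ + K' * ε := by
            exact add_le_add (le_refl _) (mul_le_mul hrhole hvtlt (norm_nonneg _) hK'pos.le)
    -- the Cramer bound at the center t
    have hcenter : (1/(n:ℝ)) * ∑ i ∈ Finset.range n, ‖charFnRV (X i n) t‖ ≤ 1 - δ := by
      refine le_trans (hn t hts) ?_
      have h1 : ‖t‖^b ≤ ((k:ℝ)*R)^b := Real.rpow_le_rpow (norm_nonneg t) htub hb.le
      have h2 : (0:ℝ) < ‖t‖^b := Real.rpow_pos_of_pos htpos b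
      have : δ ≤ C/‖t‖^b := by
        rw [hδdef]
        exact div_le_div_of_nonneg_left hC.le h2 h1
      linarith
    have hKε : K' * ε = δ/2 := by
      rw [hεdef]
      field_simp
    have hfv : (1/(n:ℝ)) * ∑ i ∈ Finset.range n, ‖charFnRV (X i n) v‖ ≤ 1 - δ/2 := by
      rw [hKε] at hlip
      linarith
    -- second moment trick
    have hkey : ∀ i ∈ Finset.range n, ‖charFnRV (X i n) u‖^2
        ≤ 1 - (1 - ‖charFnRV (X i n) v‖) / (k:ℝ)^2 := by
      intro i _
      have hmap : IsProbabilityMeasure (Measure.map (X i n) ℙ) :=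
        Measure.isProbabilityMeasure_map (hmeas i n).aemeasurable
      rw [aux_charFnRV_eq_chi (X i n) (hmeas i n), aux_charFnRV_eq_chi (X i n) (hmeas i n)]
      set μ := Measure.map (X i n) ℙ
      have h1 := aux_normSq_smul μ k u
      rw [← hvdef] at h1
      have h2 : ‖chiAux μ v‖^2 ≤ ‖chiAux μ v‖ := by
        rw [sq]
        calc ‖chiAux μ v‖ * ‖chiAux μ v‖
            ≤ 1 * ‖chiAux μ v‖ :=
              mul_le_mul_of_nonneg_right (aux_norm_chi_le_one μ v) (norm_nonneg _)
          _ = ‖chiAux μ v‖ := one_mul _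
      rw [mul_comm] at h1
      have h3 : (1 - ‖chiAux μ v‖) / (k:ℝ)^2 ≤ 1 - ‖chiAux μ u‖^2 := by
        calc (1 - ‖chiAux μ v‖) / (k:ℝ)^2
            ≤ (1 - ‖chiAux μ v‖^2) / (k:ℝ)^2 :=
              div_le_div_of_nonneg_right (by linarith) hk2.le
          _ ≤ 1 - ‖chiAux μ u‖^2 := by
              rw [div_le_iff₀ hk2]
              exact h1
      linarith [h3]
    have hS2 : (1/(n:ℝ)) * ∑ i ∈ Finset.range n, ‖charFnRV (X i n) u‖^2
        ≤ 1 - (δ/2) / (k:ℝ)^2 := by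
      have hsum2 : ∑ i ∈ Finset.range n, ‖charFnRV (X i n) u‖^2
          ≤ ∑ i ∈ Finset.range n, (1 - (1 - ‖charFnRV (X i n) v‖) / (k:ℝ)^2) :=
        Finset.sum_le_sum hkey
      have heq : (1/(n:ℝ)) * ∑ i ∈ Finset.range n, (1 - (1 - ‖charFnRV (X i n) v‖) / (k:ℝ)^2)
          = 1 - (1 - (1/(n:ℝ)) * ∑ i ∈ Finset.range n, ‖charFnRV (X i n) v‖) / (k:ℝ)^2 := by
        rw [Finset.sum_sub_distrib, ← Finset.sum_div, Finset.sum_sub_distrib]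
        simp only [Finset.sum_const, Finset.card_range, nsmul_eq_mul, mul_one]
        field_simp
      have hstep : (1/(n:ℝ)) * ∑ i ∈ Finset.range n, ‖charFnRV (X i n) u‖^2
          ≤ 1 - (1 - (1/(n:ℝ)) * ∑ i ∈ Finset.range n, ‖charFnRV (X i n) v‖) / (k:ℝ)^2 := by
        rw [← heq]
        exact mul_le_mul_of_nonneg_left hsum2 (by positivity)
      have hmono : (δ/2) / (k:ℝ)^2
          ≤ (1 - (1/(n:ℝ)) * ∑ i ∈ Finset.range n, ‖charFnRV (X i n) v‖) / (k:ℝ)^2 := by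
        apply div_le_div_of_nonneg_right ?_ hk2.le
        · linarith
      linarith [hmono, hstep]
    -- Cauchy-Schwarz
    have hCS : ((1/(n:ℝ)) * ∑ i ∈ Finset.range n, ‖charFnRV (X i n) u‖)^2
        ≤ (1/(n:ℝ)) * ∑ i ∈ Finset.range n, ‖charFnRV (X i n) u‖^2 := by
      have h := sq_sum_le_card_mul_sum_sq
        (s := Finset.range n) (f := fun i => ‖charFnRV (X i n) u‖)
      rw [Finset.card_range] at h
      have hrw : ((1/(n:ℝ)) * ∑ i ∈ Finset.range n, ‖charFnRV (X i n) u‖)^2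
          = (1/(n:ℝ))^2 * (∑ i ∈ Finset.range n, ‖charFnRV (X i n) u‖)^2 := by ring
      rw [hrw]
      calc (1/(n:ℝ))^2 * (∑ i ∈ Finset.range n, ‖charFnRV (X i n) u‖)^2
          ≤ (1/(n:ℝ))^2 * ((n:ℝ) * ∑ i ∈ Finset.range n, ‖charFnRV (X i n) u‖^2) := by
            apply mul_le_mul_of_nonneg_left h (by positivity)
        _ = (1/(n:ℝ)) * ((n:ℝ) * (1/(n:ℝ))) * ∑ i ∈ Finset.range n, ‖charFnRV (X i n) u‖^2 := by
            ring
        _ = (1/(n:ℝ)) * ∑ i ∈ Finset.range n, ‖charFnRV (X i n) u‖^2 := by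
            rw [mul_one_div, div_self hnpos.ne', mul_one]
    have hfnonneg : (0:ℝ) ≤ (1/(n:ℝ)) * ∑ i ∈ Finset.range n, ‖charFnRV (X i n) u‖ := by
      apply mul_nonneg (by positivity)
      exact Finset.sum_nonneg fun i _ => norm_nonneg _
    have hS2nonneg : (0:ℝ) ≤ (1/(n:ℝ)) * ∑ i ∈ Finset.range n, ‖charFnRV (X i n) u‖^2 := by
      apply mul_nonneg (by positivity)
      exact Finset.sum_nonneg fun i _ => sq_nonneg _
    calc (1/(n:ℝ)) * ∑ i ∈ Finset.range n, ‖charFnRV (X i n) u‖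
        ≤ Real.sqrt ((1/(n:ℝ)) * ∑ i ∈ Finset.range n, ‖charFnRV (X i n) u‖^2) :=
          (Real.le_sqrt hfnonneg hS2nonneg).mpr hCS
      _ ≤ M := by
          rw [hMdef]
          exact Real.sqrt_le_sqrt hS2
  -- conclude
  have hnonneg : ∀ n : ℕ,
      (0:ℝ) ≤ ⨆ u : {u : EuclideanSpace ℝ (Fin d) // r ≤ ‖u‖ ∧ ‖u‖ ≤ R},
        (1 / (n : ℝ)) * ∑ i ∈ Finset.range n,
          ‖charFnRV (X i n) (u : EuclideanSpace ℝ (Fin d))‖ := by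
    intro n
    apply Real.iSup_nonneg
    intro u
    apply mul_nonneg (by positivity)
    exact Finset.sum_nonneg fun i _ => norm_nonneg _
  have hlimsup : limsup (fun n : ℕ =>
      ⨆ u : {u : EuclideanSpace ℝ (Fin d) // r ≤ ‖u‖ ∧ ‖u‖ ≤ R},
        (1 / (n : ℝ)) * ∑ i ∈ Finset.range n,
          ‖charFnRV (X i n) (u : EuclideanSpace ℝ (Fin d))‖) atTop ≤ M :=
    limsup_le_of_le (isCoboundedUnder_le_of_le atTop hnonneg) hub
  refine lt_of_le_of_lt hlimsup ?_
  rw [hMdef]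
  rw [Real.sqrt_lt' one_pos]
  have : (0:ℝ) < (δ/2) / (k:ℝ)^2 := by positivity
  nlinarith
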